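/- For any real weights ω₀,...,ω_{n-1} and points 0 = t₀ ≤ t₁ ≤ ... ≤ tₙ = 1 with Sₖ = ∑_{j=0}^{k} ωⱼ, the quantity ∑_{k=0}^{n-1}[(Sₖ - tₖ)² + (Sₖ - t_{k+1})²] is at least 1/(2n), with equality attained when Sₖ = (2k+1)/(2n) and tₖ = k/n. -/

import Mathlib

theorem stmt_17 (n : ℕ) (hn : 1 ≤ n) (ω t : ℕ → ℝ)
    (ht0 : t 0 = 0) (htn : t n = 1)
    (hmono : ∀ k < n, t k ≤ t (k + 1)) :
    (1 / (2 * (n : ℝ)) ≤ ∑ k ∈ Finset.range n,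
        (((∑ j ∈ Finset.range (k + 1), ω j) - t k)^2
          + ((∑ j ∈ Finset.range (k + 1), ω j) - t (k + 1))^2)) ∧
    (((∀ k < n, (∑ j ∈ Finset.range (k + 1), ω j) = (2 * (k : ℝ) + 1) / (2 * n)) ∧
        (∀ k ≤ n, t k = (k : ℝ) / n)) →
      ∑ k ∈ Finset.range n,
        (((∑ j ∈ Finset.range (k + 1), ω j) - t k)^2
          + ((∑ j ∈ Finset.range (k + 1), ω j) - t (k + 1))^2)
        = 1 / (2 * (n : ℝ))) := by
  have hn0 : (0:ℝ) < n := by exact_mod_cast hn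
  constructor
  · -- lower bound
    have h1 : ∀ k ∈ Finset.range n,
        (t (k+1) - t k)^2 / 2 ≤
        (((∑ j ∈ Finset.range (k + 1), ω j) - t k)^2
          + ((∑ j ∈ Finset.range (k + 1), ω j) - t (k + 1))^2) := by
      intro k _
      nlinarith [sq_nonneg (2 * (∑ j ∈ Finset.range (k + 1), ω j) - t k - t (k+1))]
    have h2 : (∑ k ∈ Finset.range n, (t (k+1) - t k))^2
        ≤ n * ∑ k ∈ Finset.range n, (t (k+1) - t k)^2 := by
      have := sq_sum_le_card_mul_sum_sq (s := Finset.range n) (f := fun k => t (k+1) - t k)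
      simpa using this
    have htel : ∑ k ∈ Finset.range n, (t (k+1) - t k) = 1 := by
      rw [Finset.sum_range_sub]; rw [ht0, htn]; ring
    rw [htel] at h2
    have h3 : 1 / (n:ℝ) ≤ ∑ k ∈ Finset.range n, (t (k+1) - t k)^2 := by
      rw [div_le_iff₀ hn0]
      nlinarith
    calc 1 / (2 * (n:ℝ)) = (1 / (n:ℝ)) / 2 := by ring
      _ ≤ (∑ k ∈ Finset.range n, (t (k+1) - t k)^2) / 2 := by linarith
      _ = ∑ k ∈ Finset.range n, (t (k+1) - t k)^2 / 2 := by
          rw [Finset.sum_div]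
      _ ≤ _ := Finset.sum_le_sum h1
  · rintro ⟨hS, ht⟩
    have : ∀ k ∈ Finset.range n,
        (((∑ j ∈ Finset.range (k + 1), ω j) - t k)^2
          + ((∑ j ∈ Finset.range (k + 1), ω j) - t (k + 1))^2)
        = 1 / (2 * n^2) := by
      intro k hk
      rw [Finset.mem_range] at hk
      rw [hS k hk, ht k (le_of_lt hk), ht (k+1) hk]
      push_cast
      field_simp
      ring
    rw [Finset.sum_congr rfl this, Finset.sum_const, Finset.card_range, nsmul_eq_mul]
    field_simp
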